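/- Let I be a small category with a zero object, and K a complete and cocomplete category. The full subcategory of reduced diagrams [I,K]_red ⊆ [I,K] is a reflective subcategory (the reflector R exists), and hence [I,K]_red is complete and cocomplete: limits are computed levelwise (as in [I,K]), and colimits are computed by applying R to the colimit in [I,K]. -/

import Mathlib

open CategoryTheory Limits

/-- Reduced diagrams: functors `X : I ⥤ K` with `X O` isomorphic to the terminal
object, where `O` is the zero object of `I`. -/
def ReducedDiagram (I : Type*) [Category I] (K : Type*) [Category K] [HasTerminal K]
    (O : I) : Type _ :=
  ObjectProperty.FullSubcategory (fun X : I ⥤ K => Nonempty (X.obj O ≅ ⊤_ K))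

instance (I : Type*) [Category I] (K : Type*) [Category K] [HasTerminal K] (O : I) :
    Category (ReducedDiagram I K O) :=
  ObjectProperty.FullSubcategory.category _

section Aux

universe v u

variable {I : Type v} [SmallCategory I] {K : Type u} [Category.{v} K]

/-- The property of being reduced is closed under limits (computed levelwise). -/
lemma reduced_closedUnderLimits [HasLimits K] (O : I) (J : Type v) [SmallCategory J] :
    ObjectProperty.IsClosedUnderLimitsOfShape (fun X : I ⥤ K => Nonempty (X.obj O ≅ ⊤_ K)) J := by
  refine ⟨?_⟩
  rintro X ⟨⟨⟨F, π, hc⟩, hF⟩⟩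
  let e : ∀ j, (F.obj j).obj O ≅ ⊤_ K := fun j => (hF j).some
  let s : Cone (F ⋙ (evaluation I K).obj O) :=
    { pt := ⊤_ K
      π :=
        { app := fun j => (e j).inv
          naturality := fun j j' f => by
            rw [← cancel_mono (e j').hom]
            exact terminal.hom_ext _ _ } }
  have hs : IsLimit s :=
    { lift := fun t => terminal.from t.pt
      fac := fun t j => by
        rw [← cancel_mono (e j).hom]
        exact terminal.hom_ext _ _
      uniq := fun t m _ => terminal.hom_ext _ _ }
  exact ⟨(isLimitOfPreserves ((evaluation I K).obj O) hc).conePointUniqueUpToIso hs⟩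

end Aux

/-- For `I` small with a zero object and `K` complete and
cocomplete, the reduced diagrams form a reflective subcategory of `[I,K]`, which is
therefore complete and cocomplete; limits are computed levelwise (the inclusion
preserves them) and colimits are obtained by applying the reflector `R` to the
colimit in `[I,K]` (`R`, being a left adjoint, preserves colimits). -/
theorem reduced_reflective_complete_cocomplete
    {I : Type v} [SmallCategory I] {K : Type u} [Category.{v} K]
    [HasLimits K] [HasColimits K]
    (O : I) (hO : IsInitial O) (hO' : IsTerminal O) :
    ∃ (R : (I ⥤ K) ⥤ ReducedDiagram I K O)
      (_ : R ⊣ ObjectProperty.ι _),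
      HasLimits (ReducedDiagram I K O) ∧ HasColimits (ReducedDiagram I K O) ∧
      Nonempty (PreservesLimits (ObjectProperty.ι
        (fun X : I ⥤ K => Nonempty (X.obj O ≅ ⊤_ K)))) ∧
      Nonempty (PreservesColimits R) := by
  set P : (I ⥤ K) → Prop := fun X => Nonempty (X.obj O ≅ ⊤_ K) with hP
  -- limits exist in the subcategory and are created (hence preserved) by the inclusion
  haveI hL : HasLimits (ObjectProperty.FullSubcategory P) :=
    ⟨fun J _ => by
      haveI := reduced_closedUnderLimits (K := K) O J
      exact hasLimitsOfShape_of_closedUnderLimits (P := P) (J := J)⟩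
  haveI hCr : ∀ (J : Type v) [SmallCategory J],
      CreatesLimitsOfShape J (ObjectProperty.ι P) := fun J _ =>
    haveI := reduced_closedUnderLimits (K := K) O J
    createsLimitsOfShapeFullSubcategoryInclusion (P := P) (J := J)
  haveI hPres : PreservesLimits (ObjectProperty.ι P) :=
    ⟨fun {J} _ => inferInstance⟩
  -- solution set condition, via the pushout construction
  have ssc : SolutionSetCondition (ObjectProperty.ι P) := by
    intro A
    -- the natural transformation from the constant functor at `A O`
    let η : (Functor.const I).obj (A.obj O) ⟶ A :=
      { app := fun a => A.map (hO.to a)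
        naturality := fun a b f => by
          dsimp
          rw [Category.id_comp, ← A.map_comp]
          congr 1
          exact hO.hom_ext _ _ }
    let τ : (Functor.const I).obj (A.obj O) ⟶ (Functor.const I).obj (⊤_ K) :=
      (Functor.const I).map (terminal.from (A.obj O))
    -- the reflection of `A` is the pushout of `η` along `τ`
    have hRA : P (pushout η τ) := by
      haveI : IsIso (η.app O) := by
        show IsIso (A.map (hO.to O))
        rw [hO.hom_ext (hO.to O) (𝟙 O), A.map_id]
        infer_instance
      have i1 : (pushout η τ).obj O ≅ pushout (η.app O) (τ.app O) :=
        (PreservesPushout.iso ((evaluation I K).obj O) η τ).symm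
      exact ⟨i1 ≪≫ (asIso (pushout.inr (η.app O) (τ.app O))).symm⟩
    refine ⟨PUnit, fun _ => ⟨pushout η τ, hRA⟩, fun _ => pushout.inl η τ, ?_⟩
    intro Y h
    let eY : Y.obj.obj O ≅ ⊤_ K := Y.property.some
    let k : (Functor.const I).obj (⊤_ K) ⟶ Y.obj :=
      { app := fun a => eY.inv ≫ Y.obj.map (hO.to a)
        naturality := fun a b f => by
          dsimp
          rw [Category.id_comp, Category.assoc, ← Y.obj.map_comp]
          congr 2
          exact hO.hom_ext _ _ }
    have w : η ≫ h = τ ≫ k := by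
      ext a
      have hnat : A.map (hO.to a) ≫ h.app a = h.app O ≫ Y.obj.map (hO.to a) :=
        h.naturality (hO.to a)
      have hfac : h.app O = terminal.from (A.obj O) ≫ eY.inv := by
        rw [← cancel_mono eY.hom]
        exact terminal.hom_ext _ _
      dsimp [η, τ, k]
      rw [hnat, hfac]
      simp
    refine ⟨PUnit.unit, ObjectProperty.homMk (pushout.desc h k w), ?_⟩
    simp
    exact pushout.inl_desc _ _ _
  haveI : (ObjectProperty.ι P).IsRightAdjoint :=
    isRightAdjoint_of_preservesLimits_of_solutionSetCondition _ ssc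
  let R : (I ⥤ K) ⥤ ObjectProperty.FullSubcategory P := (ObjectProperty.ι P).leftAdjoint
  let adj : R ⊣ ObjectProperty.ι P :=
    Adjunction.ofIsRightAdjoint (ObjectProperty.ι P)
  haveI : Reflective (ObjectProperty.ι P) := { L := R, adj := adj }
  have hC : HasColimits (ObjectProperty.FullSubcategory P) :=
    hasColimits_of_reflective (ObjectProperty.ι P)
  exact ⟨R, adj, hL, hC, ⟨hPres⟩,
    ⟨adj.leftAdjoint_preservesColimits⟩⟩
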